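/- Kernel intersection decomposition for two factors: Let {ρ¹_j}_{j∈[ℓ₁]} and {ρ²_j}_{j∈[ℓ₂]} be linear operators on finite-dimensional inner product spaces H₁, H₂ such that the ranges of {ρⁱ_j}_j span Hᵢ for i=1,2. Fix (x₁, x₂). Then ⋂_{(y₁,y₂)≠(x₁,x₂)} ker(ρ¹_{y₁} ⊗ ρ²_{y₂}) = (⋂_{j≠x₁} ker(ρ¹_j)) ⊗ (⋂_{j≠x₂} ker(ρ²_j)). -/

import Mathlib

open Matrix Kronecker ComplexOrder

/-- The subspace of `(Fin d₁ × Fin d₂) → ℂ` spanned by pure (Kronecker) tensors with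
components in `U` and `W`. -/
noncomputable def tensorSub {d₁ d₂ : ℕ} (U : Submodule ℂ (Fin d₁ → ℂ)) (W : Submodule ℂ (Fin d₂ → ℂ)) :
    Submodule ℂ (Fin d₁ × Fin d₂ → ℂ) :=
  Submodule.span ℂ
    {x | ∃ u ∈ U, ∃ w ∈ W, x = fun p : Fin d₁ × Fin d₂ => u p.1 * w p.2}

lemma kron_mulVec_apply {m n : ℕ} (A : Matrix (Fin m) (Fin m) ℂ) (B : Matrix (Fin n) (Fin n) ℂ)
    (v : Fin m × Fin n → ℂ) (p : Fin m × Fin n) :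
    ((A ⊗ₖ B) *ᵥ v) p = ∑ q : Fin m × Fin n, A p.1 q.1 * B p.2 q.2 * v q := by
  simp [Matrix.mulVec, dotProduct, Matrix.kroneckerMap_apply]

lemma kron_mulVec_pure {m n : ℕ} (A : Matrix (Fin m) (Fin m) ℂ) (B : Matrix (Fin n) (Fin n) ℂ)
    (u : Fin m → ℂ) (w : Fin n → ℂ) :
    ((A ⊗ₖ B) *ᵥ (fun pq => u pq.1 * w pq.2))
      = fun pq => (A *ᵥ u) pq.1 * (B *ᵥ w) pq.2 := by
  funext pq
  rw [kron_mulVec_apply]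
  simp only [Matrix.mulVec, dotProduct]
  rw [Finset.sum_mul_sum, Fintype.sum_prod_type]
  exact Finset.sum_congr rfl fun i _ => Finset.sum_congr rfl fun j _ => by ring

lemma kron_one_mulVec {m n : ℕ} (A : Matrix (Fin m) (Fin m) ℂ)
    (v : Fin m × Fin n → ℂ) (pq : Fin m × Fin n) :
    ((A ⊗ₖ (1 : Matrix (Fin n) (Fin n) ℂ)) *ᵥ v) pq
      = (A *ᵥ (fun p => v (p, pq.2))) pq.1 := by
  rw [kron_mulVec_apply, Fintype.sum_prod_type]
  simp only [Matrix.one_apply, mul_ite, mul_one, mul_zero, ite_mul, zero_mul,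
    Finset.sum_ite_eq, Finset.mem_univ, if_true]
  simp [Matrix.mulVec, dotProduct]

lemma one_kron_mulVec {m n : ℕ} (B : Matrix (Fin n) (Fin n) ℂ)
    (v : Fin m × Fin n → ℂ) (pq : Fin m × Fin n) :
    (((1 : Matrix (Fin m) (Fin m) ℂ) ⊗ₖ B) *ᵥ v) pq
      = (B *ᵥ (fun q => v (pq.1, q))) pq.2 := by
  rw [kron_mulVec_apply, Fintype.sum_prod_type]
  simp only [Matrix.one_apply, mul_ite, mul_one, mul_zero, ite_mul, zero_mul,
    Finset.sum_ite_eq, Finset.mem_univ, if_true]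
  simp [Matrix.mulVec, dotProduct]

lemma sum_mulVec' {m ι : Type*} [Fintype m] [Fintype ι] (M : ι → Matrix m m ℂ) (v : m → ℂ) :
    (∑ j, M j) *ᵥ v = ∑ j, M j *ᵥ v := by
  funext p
  simp only [Matrix.mulVec, dotProduct, Matrix.sum_apply, Finset.sum_apply,
    Finset.sum_mul]
  rw [Finset.sum_comm]

lemma sum_isUnit {d ℓ : ℕ} (ρ : Fin ℓ → Matrix (Fin d) (Fin d) ℂ)
    (hρ : ∀ j, (ρ j).PosSemidef)
    (hspan : (⨆ j, LinearMap.range (ρ j).mulVecLin) = ⊤) :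
    IsUnit (∑ j, ρ j) := by
  rw [← Matrix.mulVec_injective_iff_isUnit]
  have hker : ∀ x : Fin d → ℂ, (∑ j, ρ j) *ᵥ x = 0 → x = 0 := by
    intro x hx
    have h0 : ∑ j, star x ⬝ᵥ (ρ j *ᵥ x) = 0 := by
      have : star x ⬝ᵥ ((∑ j, ρ j) *ᵥ x) = 0 := by rw [hx, dotProduct_zero]
      rw [← this, sum_mulVec']
      simp only [dotProduct, Finset.sum_apply, Finset.mul_sum]
      rw [Finset.sum_comm]
    have hz : ∀ j, ρ j *ᵥ x = 0 := by
      intro j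
      have := (Finset.sum_eq_zero_iff_of_nonneg
        (fun j _ => (hρ j).dotProduct_mulVec_nonneg x)).mp h0 j (Finset.mem_univ j)
      exact ((hρ j).dotProduct_mulVec_zero_iff x).mp this
    let φ : (Fin d → ℂ) →ₗ[ℂ] ℂ :=
      { toFun := fun u => star x ⬝ᵥ u
        map_add' := fun a b => dotProduct_add _ _ _
        map_smul' := fun c a => by simp [dotProduct_smul] }
    have hle : (⨆ j, LinearMap.range (ρ j).mulVecLin) ≤ LinearMap.ker φ := by
      refine iSup_le fun j => ?_
      rintro _ ⟨u, rfl⟩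
      have hst : star x ᵥ* ρ j = 0 := by
        have := congrArg star (hz j)
        rw [Matrix.star_mulVec, (hρ j).1.eq] at this
        simpa using this
      show star x ⬝ᵥ ((ρ j).mulVecLin u) = 0
      rw [Matrix.mulVecLin_apply, Matrix.dotProduct_mulVec, hst, zero_dotProduct]
    rw [hspan, top_le_iff] at hle
    have hx0 : x ∈ LinearMap.ker φ := hle ▸ Submodule.mem_top
    exact dotProduct_star_self_eq_zero.mp (LinearMap.mem_ker.mp hx0)
  intro x y hxy
  have : (∑ j, ρ j) *ᵥ (x - y) = 0 := by
    rw [Matrix.mulVec_sub, hxy, sub_self]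
  exact sub_eq_zero.mp (hker _ this)

lemma mem_tensorSub_of_cols_rows {d₁ d₂ : ℕ} (U : Submodule ℂ (Fin d₁ → ℂ))
    (W : Submodule ℂ (Fin d₂ → ℂ)) (v : Fin d₁ × Fin d₂ → ℂ)
    (hcol : ∀ q, (fun p => v (p, q)) ∈ U) (hrow : ∀ p, (fun q => v (p, q)) ∈ W) :
    v ∈ tensorSub U W := by
  classical
  let b := Module.finBasis ℂ U
  have hext : ∀ i, ∃ φ : (Fin d₁ → ℂ) →ₗ[ℂ] ℂ,
      ∀ u : U, φ u = b.coord i u := by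
    intro i
    obtain ⟨g, hg⟩ := LinearMap.exists_extend (V' := ℂ) (b.coord i)
    exact ⟨g, fun u => by rw [← hg]; rfl⟩
  choose φ hφ using hext
  set w : Fin (Module.finrank ℂ U) → Fin d₂ → ℂ :=
    fun i q => φ i (fun p => v (p, q)) with hw
  have hwW : ∀ i, w i ∈ W := by
    intro i
    have hrep : w i = ∑ p, φ i ((Pi.single p (1 : ℂ) : Fin d₁ → ℂ)) • (fun q => v (p, q)) := by
      funext q
      have : (fun p => v (p, q)) = ∑ p, v (p, q) • (Pi.single p (1 : ℂ) : Fin d₁ → ℂ) := by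
        funext p'
        simp [Pi.single_apply, Finset.sum_apply, eq_comm]
      rw [hw]
      simp only [this, map_sum, _root_.map_smul]
      simp [Finset.sum_apply, smul_eq_mul, mul_comm]
    rw [hrep]
    exact Submodule.sum_mem _ fun p _ => Submodule.smul_mem _ _ (hrow p)
  have hdec : v = ∑ i, fun pq : Fin d₁ × Fin d₂ => (b i : Fin d₁ → ℂ) pq.1 * w i pq.2 := by
    funext pq
    obtain ⟨p, q⟩ := pq
    have hc : (⟨fun p => v (p, q), hcol q⟩ : U)
        = ∑ i, b.repr ⟨fun p => v (p, q), hcol q⟩ i • b i := (b.sum_repr _).symm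
    have hc' : v (p, q) = ∑ i, b.repr ⟨fun p => v (p, q), hcol q⟩ i * (b i : Fin d₁ → ℂ) p := by
      have := congrArg (fun u : U => (u : Fin d₁ → ℂ) p) hc
      simp only [Submodule.coe_sum, Finset.sum_apply, Submodule.coe_smul, Pi.smul_apply, smul_eq_mul] at this; exact this
    have hwq : ∀ i, w i q = b.repr ⟨fun p => v (p, q), hcol q⟩ i := by
      intro i
      rw [hw]
      simp only
      rw [hφ i ⟨fun p => v (p, q), hcol q⟩]
      rfl
    simp only [Finset.sum_apply]
    rw [hc']
    exact Finset.sum_congr rfl fun i _ => by rw [hwq i]; ring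
  rw [hdec]
  exact Submodule.sum_mem _ fun i _ => Submodule.subset_span
    ⟨b i, (b i).2, w i, hwW i, rfl⟩

theorem kernel_intersection_decomposition {d₁ d₂ ℓ₁ ℓ₂ : ℕ}
    (ρ₁ : Fin ℓ₁ → Matrix (Fin d₁) (Fin d₁) ℂ)
    (ρ₂ : Fin ℓ₂ → Matrix (Fin d₂) (Fin d₂) ℂ)
    (hρ₁ : ∀ j, (ρ₁ j).PosSemidef) (hρ₂ : ∀ j, (ρ₂ j).PosSemidef)
    (hspan₁ : (⨆ j, LinearMap.range (ρ₁ j).mulVecLin) = ⊤)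
    (hspan₂ : (⨆ j, LinearMap.range (ρ₂ j).mulVecLin) = ⊤)
    (x₁ : Fin ℓ₁) (x₂ : Fin ℓ₂) :
    (⨅ p : {p : Fin ℓ₁ × Fin ℓ₂ // p ≠ (x₁, x₂)},
        LinearMap.ker ((ρ₁ p.1.1 ⊗ₖ ρ₂ p.1.2)).mulVecLin)
      = tensorSub
          (⨅ j : {j : Fin ℓ₁ // j ≠ x₁}, LinearMap.ker (ρ₁ j.1).mulVecLin)
          (⨅ j : {j : Fin ℓ₂ // j ≠ x₂}, LinearMap.ker (ρ₂ j.1).mulVecLin) := by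
  classical
  apply le_antisymm
  · -- hard direction
    intro v hv
    have hv' : ∀ (y : Fin ℓ₁ × Fin ℓ₂), y ≠ (x₁, x₂) → (ρ₁ y.1 ⊗ₖ ρ₂ y.2) *ᵥ v = 0 := by
      intro y hy
      have := (Submodule.mem_iInf _).mp hv ⟨y, hy⟩
      simpa [Matrix.mulVecLin_apply] using this
    have hS₂ : IsUnit (∑ j, ρ₂ j) := sum_isUnit ρ₂ hρ₂ hspan₂
    have hS₁ : IsUnit (∑ j, ρ₁ j) := sum_isUnit ρ₁ hρ₁ hspan₁
    have hcolker : ∀ (y₁ : Fin ℓ₁), y₁ ≠ x₁ → ∀ q, ρ₁ y₁ *ᵥ (fun p => v (p, q)) = 0 := by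
      intro y₁ hy₁ q
      have h2 : (ρ₁ y₁ ⊗ₖ (∑ j, ρ₂ j)) *ᵥ v = 0 := by
        have hsum : ρ₁ y₁ ⊗ₖ (∑ j, ρ₂ j) = ∑ j, ρ₁ y₁ ⊗ₖ ρ₂ j := by
          ext pq pq'
          simp [Matrix.kroneckerMap_apply, Matrix.sum_apply, Finset.mul_sum]
        rw [hsum, sum_mulVec']
        refine Finset.sum_eq_zero fun j _ => ?_
        exact hv' (y₁, j) (by simp [Prod.ext_iff, hy₁])
      have h3 : (ρ₁ y₁ ⊗ₖ (1 : Matrix (Fin d₂) (Fin d₂) ℂ)) *ᵥ v = 0 := by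
        have hm : ((1 : Matrix (Fin d₁) (Fin d₁) ℂ) ⊗ₖ (∑ j, ρ₂ j)⁻¹)
            * (ρ₁ y₁ ⊗ₖ (∑ j, ρ₂ j)) = ρ₁ y₁ ⊗ₖ 1 := by
          rw [← Matrix.mul_kronecker_mul, Matrix.one_mul,
            Matrix.nonsing_inv_mul _ ((Matrix.isUnit_iff_isUnit_det _).mp hS₂)]
        rw [← hm, ← Matrix.mulVec_mulVec, h2, Matrix.mulVec_zero]
      funext p
      have := congrFun h3 (p, q)
      rw [kron_one_mulVec] at this
      simpa using this
    have hrowker : ∀ (y₂ : Fin ℓ₂), y₂ ≠ x₂ → ∀ p, ρ₂ y₂ *ᵥ (fun q => v (p, q)) = 0 := by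
      intro y₂ hy₂ p
      have h2 : ((∑ j, ρ₁ j) ⊗ₖ ρ₂ y₂) *ᵥ v = 0 := by
        have hsum : (∑ j, ρ₁ j) ⊗ₖ ρ₂ y₂ = ∑ j, ρ₁ j ⊗ₖ ρ₂ y₂ := by
          ext pq pq'
          simp [Matrix.kroneckerMap_apply, Matrix.sum_apply, Finset.sum_mul]
        rw [hsum, sum_mulVec']
        refine Finset.sum_eq_zero fun j _ => ?_
        exact hv' (j, y₂) (by simp [Prod.ext_iff, hy₂])
      have h3 : ((1 : Matrix (Fin d₁) (Fin d₁) ℂ) ⊗ₖ ρ₂ y₂) *ᵥ v = 0 := by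
        have hm : ((∑ j, ρ₁ j)⁻¹ ⊗ₖ (1 : Matrix (Fin d₂) (Fin d₂) ℂ))
            * ((∑ j, ρ₁ j) ⊗ₖ ρ₂ y₂) = (1 : Matrix (Fin d₁) (Fin d₁) ℂ) ⊗ₖ ρ₂ y₂ := by
          rw [← Matrix.mul_kronecker_mul, Matrix.one_mul,
            Matrix.nonsing_inv_mul _ ((Matrix.isUnit_iff_isUnit_det _).mp hS₁)]
        rw [← hm, ← Matrix.mulVec_mulVec, h2, Matrix.mulVec_zero]
      funext q
      have := congrFun h3 (p, q)
      rw [one_kron_mulVec] at this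
      simpa using this
    refine mem_tensorSub_of_cols_rows _ _ v (fun q => ?_) (fun p => ?_)
    · exact (Submodule.mem_iInf _).mpr fun j => LinearMap.mem_ker.mpr
        (by simpa [Matrix.mulVecLin_apply] using hcolker j.1 j.2 q)
    · exact (Submodule.mem_iInf _).mpr fun j => LinearMap.mem_ker.mpr
        (by simpa [Matrix.mulVecLin_apply] using hrowker j.1 j.2 p)
  · apply Submodule.span_le.mpr
    rintro x ⟨u, hu, w, hw, rfl⟩
    refine (Submodule.mem_iInf _).mpr ?_
    rintro ⟨⟨y₁, y₂⟩, hy⟩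
    refine LinearMap.mem_ker.mpr ?_
    rw [Matrix.mulVecLin_apply, kron_mulVec_pure]
    by_cases h1 : y₁ = x₁
    · have hy₂ : y₂ ≠ x₂ := fun h2 => hy (by rw [h1, h2])
      have hz : ρ₂ y₂ *ᵥ w = 0 := by
        have := (Submodule.mem_iInf _).mp hw ⟨y₂, hy₂⟩
        simpa [Matrix.mulVecLin_apply] using this
      funext pq; rw [hz]; simp
    · have hz : ρ₁ y₁ *ᵥ u = 0 := by
        have := (Submodule.mem_iInf _).mp hu ⟨y₁, h1⟩
        simpa [Matrix.mulVecLin_apply] using this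
      funext pq; rw [hz]; simp
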